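/- In any dGBV algebra (g, ∘, d, Δ), for every even nilpotent element S ∈ g₀ (say S^N = 0) one has the identity (d + Δ)(e^S) = (d(S) + Δ(S) + ½ [S • S]) ∘ e^S, where e^S := Σ_{r=0}^{N−1} S^r / r! (a finite sum of ∘-powers). -/

import Mathlib

/-- A differential Gerstenhaber–Batalin–Vilkovisky (dGBV) algebra over a field `k` of
characteristic zero: a `ℤ/2`-graded unital associative supercommutative algebra `A`
equipped with two odd operators `d` and `delta` (usually written `Δ`) satisfying
`d² = 0`, `Δ² = 0`, `dΔ + Δd = 0`, `d` an odd derivation and `Δ` of order two. -/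
structure DGBV (k A : Type*) [Field k] [CharZero k] [Ring A] [Algebra k A] where
  grading : ZMod 2 → Submodule k A
  graded : GradedAlgebra grading
  supercomm : ∀ (i j : ZMod 2), ∀ a ∈ grading i, ∀ b ∈ grading j,
    a * b = ((-1 : k) ^ (i.val * j.val)) • (b * a)
  d : A →ₗ[k] A
  delta : A →ₗ[k] A
  d_odd : ∀ (i : ZMod 2), ∀ a ∈ grading i, d a ∈ grading (i + 1)
  delta_odd : ∀ (i : ZMod 2), ∀ a ∈ grading i, delta a ∈ grading (i + 1)
  d_deriv : ∀ (i : ZMod 2), ∀ a ∈ grading i, ∀ b : A,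
    d (a * b) = d a * b + ((-1 : k) ^ i.val) • (a * d b)
  d_sq : ∀ a : A, d (d a) = 0
  delta_sq : ∀ a : A, delta (delta a) = 0
  d_delta : ∀ a : A, d (delta a) + delta (d a) = 0
  order_two : ∀ (i j l : ZMod 2), ∀ a ∈ grading i, ∀ b ∈ grading j, ∀ c ∈ grading l,
    delta (a * b * c) = delta (a * b) * c
      + ((-1 : k) ^ (j.val * (i.val + 1))) • (b * delta (a * c))
      + ((-1 : k) ^ i.val) • (a * delta (b * c))
      - delta a * (b * c)
      - ((-1 : k) ^ i.val) • (a * (delta b * c))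
      - ((-1 : k) ^ (i.val + j.val)) • (a * b * delta c)

/-- The odd bracket `[a • b] := (−1)^{|a|} Δ(a∘b) − (−1)^{|a|} Δ(a)∘b − a∘Δ(b)`, where
`pa` is the parity of the (homogeneous) element `a`. -/
def DGBV.br {k A : Type*} [Field k] [CharZero k] [Ring A] [Algebra k A]
    (S : DGBV k A) (pa : ℕ) (a b : A) : A :=
  ((-1 : k) ^ pa) • S.delta (a * b) - ((-1 : k) ^ pa) • (S.delta a * b) - a * S.delta b

/-- In any dGBV algebra, for every even nilpotent element `S` (with `S^N = 0`) one has
`(d + Δ)(e^S) = (d(S) + Δ(S) + ½ [S • S]) ∘ e^S`, where `e^S = Σ_{r=0}^{N−1} Sʳ/r!`. -/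
theorem dgbv_exp_master_formula {k A : Type*} [Field k] [CharZero k] [Ring A] [Algebra k A]
    (S : DGBV k A) (x : A) (hx : x ∈ S.grading 0) (N : ℕ) (hN : x ^ N = 0) :
    S.d (∑ r ∈ Finset.range N, (r.factorial : k)⁻¹ • x ^ r)
      + S.delta (∑ r ∈ Finset.range N, (r.factorial : k)⁻¹ • x ^ r)
    = (S.d x + S.delta x + (2⁻¹ : k) • S.br 0 x x)
        * (∑ r ∈ Finset.range N, (r.factorial : k)⁻¹ • x ^ r) := by
  

  letI := S.graded
  have h1 : (1:A) ∈ S.grading 0 := SetLike.one_mem_graded S.grading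
  have hpow : ∀ r : ℕ, x ^ r ∈ S.grading 0 := fun r => by
    simpa using SetLike.pow_mem_graded r hx
  have hc : ∀ b : A, Commute x b := by
    intro b
    induction b using DirectSum.Decomposition.inductionOn S.grading with
    | zero => exact Commute.zero_right x
    | @homogeneous j m =>
      have := S.supercomm 0 j x hx m m.2
      simpa [Commute, SemiconjBy, ZMod.val_zero] using this
    | add b b' hb hb' => exact hb.add_right hb'
  have hcp : ∀ (n : ℕ) (b : A), x ^ n * b = b * x ^ n := fun n b =>
    ((hc b).pow_left n).eq
  have hd1 : S.d 1 = 0 := by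
    have := S.d_deriv 0 1 h1 1
    simpa [ZMod.val_zero] using this
  have hdel1 : S.delta 1 = 0 := by
    have := S.order_two 0 0 0 1 h1 1 h1 1 h1
    simpa [ZMod.val_zero] using this
  -- the bracket as atom
  set B : A := S.br 0 x x with hBdef
  set D : A := S.delta x with hDdef
  have hB : S.delta (x ^ 2) = B + (2:k) • (x * D) := by
    rw [hBdef, DGBV.br, ← hDdef, sq]
    rw [← (hc D).eq]
    match_scalars <;> norm_num
  -- recursion from order_two
  have hrec : ∀ m : ℕ, S.delta (x ^ (m+2))
      = x ^ m * S.delta (x ^ 2) + (2:k) • (x * S.delta (x ^ (m+1)))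
        - (2:k) • (x ^ (m+1) * D) - x ^ 2 * S.delta (x ^ m) := by
    intro m
    have key := S.order_two 0 0 0 x hx x hx (x ^ m) (hpow m)
    simp only [ZMod.val_zero, Nat.mul_zero, Nat.zero_mul, pow_zero, one_smul, Nat.add_zero,
      Nat.zero_add] at key
    have e2 : x * x ^ m = x ^ (m+1) := (pow_succ' x m).symm
    have e3 : x * x = x ^ 2 := sq x |>.symm
    rw [e3] at key
    rw [show x ^ 2 * x ^ m = x ^ (m+2) from by rw [← pow_add, Nat.add_comm]] at key
    rw [e2] at key
    rw [← hcp m (S.delta (x^2)), ← hDdef] at key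
    rw [show S.delta x * x ^ (m+1) = x^(m+1) * S.delta x from (hcp (m+1) _).symm] at key
    rw [show x * (S.delta x * x ^ m) = x ^ (m+1) * S.delta x from by
      rw [← (hcp m (S.delta x)), ← mul_assoc, ← pow_succ']] at key
    rw [key, ← hDdef]
    module
  -- closed formula for delta of powers
  have hP : ∀ m : ℕ, S.delta (x ^ (m+2))
      = ((m+2 : ℕ) : k) • (x ^ (m+1) * D)
        + ((((m+2)*(m+1) : ℕ) : k) * (2⁻¹ : k)) • (x ^ m * B) := by
    have base0 : S.delta (x ^ 2)
        = ((2 : ℕ) : k) • (x ^ 1 * D) + ((((2)*(1) : ℕ) : k) * (2⁻¹ : k)) • (x ^ 0 * B) := by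
      rw [hB]
      simp only [pow_one, pow_zero, one_mul]
      match_scalars <;> norm_num
    have base1 : S.delta (x ^ 3)
        = ((3 : ℕ) : k) • (x ^ 2 * D) + ((((3)*(2) : ℕ) : k) * (2⁻¹ : k)) • (x ^ 1 * B) := by
      have h := hrec 1
      rw [pow_one, ← hDdef, hB] at h
      rw [show (1:ℕ)+2 = 3 from rfl, show (1:ℕ)+1 = 2 from rfl] at h
      rw [h]
      simp only [pow_one, mul_add, mul_smul_comm, smul_add, smul_smul, ← mul_assoc, ← sq]
      match_scalars <;> · push_cast; norm_num
    have step : ∀ m : ℕ,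
        (S.delta (x ^ (m+2)) = ((m+2 : ℕ) : k) • (x ^ (m+1) * D)
          + ((((m+2)*(m+1) : ℕ) : k) * (2⁻¹ : k)) • (x ^ m * B)) →
        (S.delta (x ^ (m+3)) = ((m+3 : ℕ) : k) • (x ^ (m+2) * D)
          + ((((m+3)*(m+2) : ℕ) : k) * (2⁻¹ : k)) • (x ^ (m+1) * B)) →
        (S.delta (x ^ (m+4)) = ((m+4 : ℕ) : k) • (x ^ (m+3) * D)
          + ((((m+4)*(m+3) : ℕ) : k) * (2⁻¹ : k)) • (x ^ (m+2) * B)) := by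
      intro m ih0 ih1
      have h := hrec (m+2)
      rw [show m+2+2 = m+4 from by omega, show m+2+1 = m+3 from by omega] at h
      rw [hB, ih0, ih1] at h
      rw [h]
      have A1 : x ^ (m+2) * (x * D) = x ^ (m+3) * D := by
        rw [← mul_assoc, ← pow_succ]
      have A2 : x * (x ^ (m+2) * D) = x ^ (m+3) * D := by
        rw [← mul_assoc, ← pow_succ']
      have A3 : x * (x ^ (m+1) * B) = x ^ (m+2) * B := by
        rw [← mul_assoc, ← pow_succ']
      have A4 : x ^ 2 * (x ^ (m+1) * D) = x ^ (m+3) * D := by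
        rw [← mul_assoc, ← pow_add, show 2+(m+1) = m+3 from by omega]
      have A5 : x ^ 2 * (x ^ m * B) = x ^ (m+2) * B := by
        rw [← mul_assoc, ← pow_add, show 2+m = m+2 from by omega]
      simp only [mul_add, mul_smul_comm, smul_add, smul_smul, A1, A2, A3, A4, A5]
      match_scalars
      · push_cast; ring
      · push_cast; field_simp; ring
    intro m
    induction m using Nat.twoStepInduction with
    | zero => exact base0
    | one => exact base1
    | more m ih0 ih1 =>
      have := step m ih0 ih1
      rw [show m+2+2 = m+4 from by omega] at this ⊢
      rw [show m+2+1 = m+3 from by omega, show m+1+2 = m+3 from by omega,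
        show m+1+1 = m+2 from by omega] at this ⊢
      exact this
  -- derivative of powers
  have hdP : ∀ m : ℕ, S.d (x ^ (m+1)) = ((m+1 : ℕ) : k) • (x ^ m * S.d x) := by
    intro m
    induction m with
    | zero => simp
    | succ m ih =>
      have h := S.d_deriv 0 x hx (x ^ (m+1))
      rw [← pow_succ'] at h
      simp only [ZMod.val_zero, pow_zero, one_smul] at h
      rw [ih, ← hcp (m+1) (S.d x), mul_smul_comm, ← mul_assoc, ← pow_succ'] at h
      rw [h]
      match_scalars
      push_cast; ring
  -- vanishing of high powers
  have hzero : ∀ r : ℕ, N ≤ r → x ^ r = 0 := fun r h => pow_eq_zero_of_le h hN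
  -- scalar identities
  have hfac1 : ∀ i : ℕ, (((i+1).factorial : k))⁻¹ * ((i+1 : ℕ) : k) = ((i.factorial : k))⁻¹ := by
    intro i
    have h0 : (i.factorial : k) ≠ 0 := Nat.cast_ne_zero.mpr i.factorial_ne_zero
    have h1 : ((i : k) + 1) ≠ 0 := by
      have := Nat.cast_ne_zero (R := k) |>.mpr (Nat.succ_ne_zero i)
      push_cast at this; exact this
    rw [Nat.factorial_succ]
    push_cast
    field_simp
  have hfac2 : ∀ i : ℕ,
      (((i+2).factorial : k))⁻¹ * ((((i+2)*(i+1) : ℕ) : k) * (2⁻¹ : k))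
        = ((i.factorial : k))⁻¹ * (2⁻¹ : k) := by
    intro i
    have h0 : (i.factorial : k) ≠ 0 := Nat.cast_ne_zero.mpr i.factorial_ne_zero
    have h1 : ((i : k) + 1) ≠ 0 := by
      have := Nat.cast_ne_zero (R := k) |>.mpr (Nat.succ_ne_zero i)
      push_cast at this; exact this
    have h2 : ((i : k) + 2) ≠ 0 := by
      have := Nat.cast_ne_zero (R := k) |>.mpr (Nat.succ_ne_zero (i+1))
      push_cast at this
      rw [show (i : k) + 1 + 1 = (i : k) + 2 from by ring] at this
      exact this
    rw [show (i+2).factorial = (i+2) * ((i+1) * i.factorial) from by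
      rw [Nat.factorial_succ, Nat.factorial_succ]]
    push_cast
    field_simp
  -- extend the sum to range (N+2)
  have hext : (∑ r ∈ Finset.range N, ((r.factorial : k))⁻¹ • x ^ r)
      = ∑ r ∈ Finset.range (N+2), ((r.factorial : k))⁻¹ • x ^ r := by
    apply Finset.sum_subset (Finset.range_subset_range.mpr (by omega))
    intro r _ hnr
    rw [hzero r (by simpa using hnr), smul_zero]
  rw [hext, map_sum, map_sum]
  simp only [LinearMap.map_smul]
  -- the d-part
  have L1 : (∑ r ∈ Finset.range (N+2), ((r.factorial : k))⁻¹ • S.d (x ^ r))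
      = ∑ i ∈ Finset.range (N+1), ((i.factorial : k))⁻¹ • (x ^ i * S.d x) := by
    rw [Finset.sum_range_succ' (fun r => ((r.factorial : k))⁻¹ • S.d (x ^ r)) (N+1)]
    simp only [pow_zero, hd1, smul_zero, add_zero]
    refine Finset.sum_congr rfl fun i _ => ?_
    rw [hdP i, smul_smul, hfac1 i]
  -- the delta-part
  have L2 : (∑ r ∈ Finset.range (N+2), ((r.factorial : k))⁻¹ • S.delta (x ^ r))
      = (∑ i ∈ Finset.range N, (((i+1).factorial : k))⁻¹ • (x ^ (i+1) * D))
        + (∑ i ∈ Finset.range N, (((i.factorial : k))⁻¹ * (2⁻¹ : k)) • (x ^ i * B))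
        + D := by
    rw [Finset.sum_range_succ' (fun r => ((r.factorial : k))⁻¹ • S.delta (x ^ r)) (N+1)]
    rw [Finset.sum_range_succ' (fun i => (((i+1).factorial : k))⁻¹ • S.delta (x ^ (i+1))) N]
    simp only [pow_zero, hdel1, smul_zero, add_zero, pow_one, Nat.factorial_one,
      Nat.cast_one, inv_one, one_smul, Nat.factorial_zero]
    rw [show (∑ i ∈ Finset.range N, (((i+1+1).factorial : k))⁻¹ • S.delta (x ^ (i+1+1)))
        = (∑ i ∈ Finset.range N, ((((i+1).factorial : k))⁻¹ • (x ^ (i+1) * D)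
            + (((i.factorial : k))⁻¹ * (2⁻¹ : k)) • (x ^ i * B))) from ?_]
    · rw [Finset.sum_add_distrib]
      simp only [Nat.zero_add, pow_one, Nat.factorial_one, Nat.cast_one, inv_one,
        one_smul, ← hDdef]
    · refine Finset.sum_congr rfl fun i _ => ?_
      rw [show i+1+1 = i+2 from rfl, hP i, smul_add, smul_smul, smul_smul,
        hfac2 i, show ((i+2 : ℕ) : k) = (((i+1)+1 : ℕ) : k) from by push_cast; ring,
        hfac1 (i+1)]
  rw [L1, L2]
  -- right-hand side
  rw [Finset.mul_sum]
  have R : ∀ r ∈ Finset.range (N+2),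
      (S.d x + S.delta x + (2⁻¹ : k) • S.br 0 x x) * (((r.factorial : k))⁻¹ • x ^ r)
        = ((r.factorial : k))⁻¹ • (x ^ r * S.d x) + ((r.factorial : k))⁻¹ • (x ^ r * D)
          + (((r.factorial : k))⁻¹ * (2⁻¹ : k)) • (x ^ r * B) := by
    intro r _
    rw [← hBdef, ← hDdef]
    rw [mul_smul_comm, add_mul, add_mul, smul_mul_assoc,
      ← hcp r (S.d x), ← hcp r D, ← hcp r B]
    rw [smul_add, smul_add, smul_smul]
  rw [Finset.sum_congr rfl R]
  rw [Finset.sum_add_distrib, Finset.sum_add_distrib]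
  -- strip vanishing top terms on the right
  have R1 : (∑ r ∈ Finset.range (N+2), ((r.factorial : k))⁻¹ • (x ^ r * S.d x))
      = ∑ i ∈ Finset.range (N+1), ((i.factorial : k))⁻¹ • (x ^ i * S.d x) := by
    rw [Finset.sum_range_succ, hzero (N+1) (by omega), zero_mul, smul_zero, add_zero]
  have R2 : (∑ r ∈ Finset.range (N+2), ((r.factorial : k))⁻¹ • (x ^ r * D))
      = (∑ i ∈ Finset.range N, (((i+1).factorial : k))⁻¹ • (x ^ (i+1) * D)) + D := by
    rw [Finset.sum_range_succ, hzero (N+1) (by omega), zero_mul, smul_zero, add_zero]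
    rw [Finset.sum_range_succ' (fun r => ((r.factorial : k))⁻¹ • (x ^ r * D)) N]
    simp [Nat.factorial_zero]
  have R3 : (∑ r ∈ Finset.range (N+2), (((r.factorial : k))⁻¹ * (2⁻¹ : k)) • (x ^ r * B))
      = ∑ i ∈ Finset.range N, (((i.factorial : k))⁻¹ * (2⁻¹ : k)) • (x ^ i * B) := by
    rw [Finset.sum_range_succ, hzero (N+1) (by omega), zero_mul, smul_zero, add_zero]
    rw [Finset.sum_range_succ, hzero N (by omega), zero_mul, smul_zero, add_zero]
  rw [R1, R2, R3]
  abel
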